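/- Milnor–Wood bound for translation numbers: for every g ≥ 1 and all invertible circle degree one lifts f₁, h₁, …, f_g, h_g (units of the monoid of circle degree one lifts), the translation number of the product of commutators satisfies |τ(⁅f₁, h₁⁆ * ⁅f₂, h₂⁆ * ⋯ * ⁅f_g, h_g⁆)| ≤ 2g − 1, where ⁅f, h⁆ = f*h*f⁻¹*h⁻¹. (Consequently, for any homomorphism ρ from the fundamental group of a compact orientable genus-g surface with one boundary component into the group of lifts of orientation-preserving circle homeomorphisms, the boundary generator δ satisfies |τ(ρ(δ))| ≤ −χ(S) = 2g − 1.) -/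

import Mathlib

open CircleDeg1Lift
open scoped commutatorElement

private lemma tau_lower (f g : CircleDeg1Liftˣ) :
    translationNumber ↑f + translationNumber ↑g - 1
      ≤ translationNumber (↑(f * g) : CircleDeg1Lift) := by
  set T := translationNumber (↑(f * g) : CircleDeg1Lift) with hT
  set n : ℤ := ⌊T⌋ + 1 with hn
  have hlt : T < (n : ℝ) := by push_cast [hn]; exact Int.lt_floor_add_one T
  have hle : (f : CircleDeg1Lift) ≤ ↑(translate (Multiplicative.ofAdd (n : ℝ)) * g⁻¹) := by
    intro y
    have h1 := map_lt_of_translationNumber_lt_int (↑(f * g) : CircleDeg1Lift) hlt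
      ((g⁻¹ : CircleDeg1Liftˣ) y)
    have h2 : ((f * g : CircleDeg1Liftˣ) : CircleDeg1Lift) ((g⁻¹ : CircleDeg1Liftˣ) y)
        = (f : CircleDeg1Lift) y := by
      simp [Units.val_mul, mul_apply]
    rw [h2] at h1
    have h3 : (↑(translate (Multiplicative.ofAdd (n : ℝ)) * g⁻¹) : CircleDeg1Lift) y
        = (n : ℝ) + (g⁻¹ : CircleDeg1Liftˣ) y := by
      simp [Units.val_mul, mul_apply]
    rw [h3]; linarith
  have hτ := translationNumber_mono hle
  have hcomm : Commute (↑(translate (Multiplicative.ofAdd (n : ℝ))) : CircleDeg1Lift)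
      (↑(g⁻¹ : CircleDeg1Liftˣ) : CircleDeg1Lift) := by
    ext x
    simp only [Units.val_mul, mul_apply, translate_apply]
    exact ((g⁻¹ : CircleDeg1Liftˣ) : CircleDeg1Lift).map_int_add n x |>.symm
  rw [Units.val_mul, translationNumber_mul_of_commute hcomm, translationNumber_translate,
    translationNumber_units_inv] at hτ
  have hfl : (n : ℝ) ≤ T + 1 := by
    push_cast [hn]; linarith [Int.floor_le T]
  linarith

private lemma tau_upper (f g : CircleDeg1Liftˣ) :
    translationNumber (↑(f * g) : CircleDeg1Lift)
      ≤ translationNumber ↑f + translationNumber ↑g + 1 := by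
  have := tau_lower g⁻¹ f⁻¹
  rw [← mul_inv_rev, translationNumber_units_inv, translationNumber_units_inv,
    translationNumber_units_inv] at this
  linarith

private lemma tau_commutator (a b : CircleDeg1Liftˣ) :
    translationNumber (↑⁅a, b⁆ : CircleDeg1Lift) ≤ 1 := by
  have h1 : ⁅a, b⁆ = a * b * a⁻¹ * b⁻¹ := commutatorElement_def a b
  have h2 := tau_upper (a * b * a⁻¹) b⁻¹
  have h3 : translationNumber (↑(a * b * a⁻¹) : CircleDeg1Lift)
      = translationNumber (↑b : CircleDeg1Lift) := by
    have := translationNumber_conj_eq a (↑b : CircleDeg1Lift)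
    simpa [Units.val_mul, mul_assoc] using this
  rw [h1]
  have hb := translationNumber_units_inv b
  calc translationNumber (↑(a * b * a⁻¹ * b⁻¹) : CircleDeg1Lift)
      ≤ translationNumber (↑(a * b * a⁻¹) : CircleDeg1Lift)
        + translationNumber (↑(b⁻¹ : CircleDeg1Liftˣ) : CircleDeg1Lift) + 1 := h2
    _ ≤ 1 := by rw [h3, hb]; linarith

private lemma tau_list : ∀ (L : List CircleDeg1Liftˣ) (u : CircleDeg1Liftˣ),
    translationNumber (↑u : CircleDeg1Lift) ≤ 1 →
    (∀ v ∈ L, translationNumber (↑v : CircleDeg1Lift) ≤ 1) →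
    translationNumber (↑((u :: L).prod) : CircleDeg1Lift) ≤ 2 * (L.length + 1 : ℝ) - 1
  | [], u, hu, _ => by simpa using hu.trans (by norm_num)
  | v :: t, u, hu, hL => by
    have ih := tau_list t v (hL v (by simp)) (fun w hw => hL w (by simp [hw]))
    have h2 := tau_upper u ((v :: t).prod)
    rw [List.prod_cons]
    calc translationNumber (↑(u * (v :: t).prod) : CircleDeg1Lift)
        ≤ translationNumber (↑u : CircleDeg1Lift)
          + translationNumber (↑((v :: t).prod) : CircleDeg1Lift) + 1 := h2
      _ ≤ 1 + (2 * (t.length + 1 : ℝ) - 1) + 1 := by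
          have := ih; linarith
      _ ≤ 2 * ((v :: t).length + 1 : ℝ) - 1 := by simp [List.length_cons]; ring_nf; linarith

/-- Milnor–Wood bound for translation numbers: the translation number of a product of
`g` commutators of invertible circle degree one lifts is at most `2g - 1` in absolute value. -/
theorem translationNumber_prod_commutators_bound
    (g : ℕ) (hg : 1 ≤ g) (f h : Fin g → CircleDeg1Liftˣ) :
    |CircleDeg1Lift.translationNumber
        (((List.ofFn (fun i => ⁅f i, h i⁆)).prod : CircleDeg1Liftˣ) : CircleDeg1Lift)|
      ≤ 2 * (g : ℝ) - 1 := by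
  obtain ⟨g, rfl⟩ : ∃ g', g = g' + 1 := ⟨g - 1, (Nat.succ_pred_eq_of_pos hg).symm⟩
  set L : List CircleDeg1Liftˣ := List.ofFn (fun i => ⁅f i, h i⁆) with hLdef
  have hLlen : L.length = g + 1 := by simp [hLdef]
  have hmem : ∀ v ∈ L, translationNumber (↑v : CircleDeg1Lift) ≤ 1 := by
    intro v hv
    rw [hLdef, List.mem_ofFn] at hv
    obtain ⟨i, rfl⟩ := hv
    exact tau_commutator _ _
  -- upper bound
  obtain ⟨u, t, hcons⟩ : ∃ u t, L = u :: t := by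
    cases hL : L with
    | nil => exfalso; rw [hL] at hLlen; simp at hLlen
    | cons a b => exact ⟨a, b, rfl⟩
  have hupper : translationNumber (↑L.prod : CircleDeg1Lift) ≤ 2 * ((g : ℝ) + 1) - 1 := by
    have := tau_list t u (hmem u (by simp [hcons])) (fun w hw => hmem w (by simp [hcons, hw]))
    rw [← hcons] at this
    have hlen : (t.length : ℝ) + 1 = (g : ℝ) + 1 := by
      have : t.length + 1 = g + 1 := by rw [← hLlen, hcons]; simp
      exact_mod_cast this
    rwa [hlen] at this
  -- lower bound via inverse
  set M : List CircleDeg1Liftˣ := List.ofFn (fun i => ⁅h i, f i⁆) with hMdef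
  have hMlen : M.length = g + 1 := by simp [hMdef]
  have hMmem : ∀ v ∈ M, translationNumber (↑v : CircleDeg1Lift) ≤ 1 := by
    intro v hv
    rw [hMdef, List.mem_ofFn] at hv
    obtain ⟨i, rfl⟩ := hv
    exact tau_commutator _ _
  have hinv : (L.prod)⁻¹ = (M.reverse).prod := by
    rw [List.prod_inv_reverse, hLdef, hMdef, List.map_ofFn]
    simp [Function.comp_def, commutatorElement_inv]
  obtain ⟨u', t', hcons'⟩ : ∃ u t, M.reverse = u :: t := by
    cases hM : M.reverse with
    | nil => exfalso; have h0 := congrArg List.length hM; simp [hMlen] at h0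
    | cons a b => exact ⟨a, b, rfl⟩
  have hMrmem : ∀ v ∈ M.reverse, translationNumber (↑v : CircleDeg1Lift) ≤ 1 := by
    intro v hv; exact hMmem v (List.mem_reverse.1 hv)
  have hlower : translationNumber (↑(M.reverse).prod : CircleDeg1Lift) ≤ 2 * ((g : ℝ) + 1) - 1 := by
    have := tau_list t' u' (hMrmem u' (by simp [hcons'])) (fun w hw => hMrmem w (by simp [hcons', hw]))
    rw [← hcons'] at this
    have hlen : (t'.length : ℝ) + 1 = (g : ℝ) + 1 := by
      have h1 : t'.length + 1 = g + 1 := by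
        have h2 := congrArg List.length hcons'
        simp [hMlen] at h2
        omega
      exact_mod_cast h1
    rwa [hlen] at this
  have hneg : translationNumber (↑(L.prod)⁻¹ : CircleDeg1Lift)
      = -translationNumber (↑L.prod : CircleDeg1Lift) := translationNumber_units_inv _
  rw [hinv] at hneg
  rw [abs_le]
  push_cast
  constructor
  · linarith [hlower, hneg.symm.le]
  · linarith [hupper]
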